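/- Let x₁ < ... < xₙ, n ≥ 3, wᵢ ∈ (0, 1/2) with Σwᵢ = 1, and a ∈ ℝ fixed. Then the function γ ↦ S₀(a,γ) := Σᵢ wᵢ γ²/((xᵢ-a)² + γ²) is strictly increasing in γ on (0,∞), satisfies lim_{γ→0} S₀(a,γ) < 1/2 and lim_{γ→∞} S₀(a,γ) = 1, and hence the equation S₀(a,γ) = 1/2 has a unique solution γ̂ > 0. -/

import Mathlib

open Finset Real Filter

/-- `γ ↦ S₀(a,γ) = Σᵢ wᵢ γ²/((xᵢ-a)² + γ²)` is strictly increasing on `(0,∞)`,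
its limit as `γ → 0⁺` is some value `< 1/2`, its limit as `γ → ∞` is `1`,
and hence `S₀(a,γ̂) = 1/2` has a unique positive solution. -/
theorem scale_equation_unique_solution (n : ℕ) (hn : 3 ≤ n) (x : Fin n → ℝ)
    (hx : StrictMono x) (w : Fin n → ℝ) (hw : ∀ i, 0 < w i) (hwhalf : ∀ i, w i < 1 / 2)
    (hw1 : ∑ i, w i = 1) (a : ℝ) :
    StrictMonoOn (fun γ : ℝ => ∑ i, w i * γ ^ 2 / ((x i - a) ^ 2 + γ ^ 2))
        (Set.Ioi (0 : ℝ)) ∧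
    (∃ c : ℝ, c < 1 / 2 ∧
      Tendsto (fun γ : ℝ => ∑ i, w i * γ ^ 2 / ((x i - a) ^ 2 + γ ^ 2))
        (nhdsWithin 0 (Set.Ioi 0)) (nhds c)) ∧
    Tendsto (fun γ : ℝ => ∑ i, w i * γ ^ 2 / ((x i - a) ^ 2 + γ ^ 2)) atTop
      (nhds 1) ∧
    (∃! γ' : ℝ, 0 < γ' ∧ (∑ i, w i * γ' ^ 2 / ((x i - a) ^ 2 + γ' ^ 2)) = 1 / 2) := by
  have hd : ∀ (i : Fin n) (γ : ℝ), 0 < γ → 0 < (x i - a) ^ 2 + γ ^ 2 := by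
    intro i γ hγ; positivity
  have hinj := hx.injective
  obtain ⟨i0, hi0⟩ : ∃ i : Fin n, x i ≠ a := by
    by_contra h
    push_neg at h
    have h01 : (⟨0, by omega⟩ : Fin n) ≠ ⟨1, by omega⟩ := by simp [Fin.ext_iff]
    exact h01 (hinj (by rw [h, h]))
  -- strict monotonicity
  have hmono : StrictMonoOn (fun γ : ℝ => ∑ i, w i * γ ^ 2 / ((x i - a) ^ 2 + γ ^ 2))
      (Set.Ioi (0 : ℝ)) := by
    intro γ1 h1 γ2 h2 h12
    simp only [Set.mem_Ioi] at h1 h2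
    have hsq : γ1 ^ 2 < γ2 ^ 2 := by nlinarith
    apply Finset.sum_lt_sum
    · intro i _
      rw [div_le_div_iff₀ (hd i γ1 h1) (hd i γ2 h2)]
      nlinarith [mul_nonneg (mul_nonneg (hw i).le (sq_nonneg (x i - a)))
        (sub_nonneg.2 hsq.le)]
    · refine ⟨i0, Finset.mem_univ _, ?_⟩
      rw [div_lt_div_iff₀ (hd i0 γ1 h1) (hd i0 γ2 h2)]
      have hda : 0 < (x i0 - a) ^ 2 := by
        have := sub_ne_zero.mpr hi0
        positivity
      nlinarith [mul_pos (mul_pos (hw i0) hda) (sub_pos.2 hsq)]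
  -- limit at 0⁺
  have htend0 : Tendsto (fun γ : ℝ => ∑ i, w i * γ ^ 2 / ((x i - a) ^ 2 + γ ^ 2))
      (nhdsWithin 0 (Set.Ioi 0)) (nhds (∑ i, if x i = a then w i else 0)) := by
    apply tendsto_finset_sum
    intro i _
    by_cases hia : x i = a
    · simp only [hia, if_pos]
      apply Tendsto.congr' (f₁ := fun _ => w i)
      · filter_upwards [self_mem_nhdsWithin] with γ hγ
        have hγ0 : γ ≠ 0 := (Set.mem_Ioi.mp hγ).ne'
        rw [sub_self]
        field_simp
        ring
      · exact tendsto_const_nhds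
    · simp only [hia, if_neg, not_false_iff]
      have hne : (x i - a) ^ 2 + (0:ℝ) ^ 2 ≠ 0 := by
        have := sub_ne_zero.mpr hia
        positivity
      have hc : ContinuousAt (fun γ : ℝ => w i * γ ^ 2 / ((x i - a) ^ 2 + γ ^ 2)) 0 :=
        ContinuousAt.div (continuousAt_const.mul ((continuous_pow 2).continuousAt))
          (continuousAt_const.add ((continuous_pow 2).continuousAt)) hne
      have := hc.tendsto
      simp only [ne_eq, OfNat.ofNat_ne_zero, not_false_eq_true, zero_pow, mul_zero,
        zero_div] at this
      exact this.mono_left nhdsWithin_le_nhds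
  have hclt : (∑ i, if x i = a then w i else 0) < 1 / 2 := by
    by_cases h : ∃ j, x j = a
    · obtain ⟨j, hj⟩ := h
      have : ∀ i : Fin n, (if x i = a then w i else 0) = if i = j then w i else 0 := by
        intro i
        by_cases hij : i = j
        · subst hij; simp [hj]
        · have : x i ≠ a := fun hxa => hij (hinj (hxa.trans hj.symm))
          simp [this, hij]
      rw [Finset.sum_congr rfl fun i _ => this i, Finset.sum_ite_eq' Finset.univ j w]
      simpa using hwhalf j
    · push_neg at h
      have : ∀ i : Fin n, (if x i = a then w i else 0) = 0 := fun i => if_neg (h i)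
      rw [Finset.sum_congr rfl fun i _ => this i, Finset.sum_const_zero]
      norm_num
  -- limit at ∞
  have htop : Tendsto (fun γ : ℝ => ∑ i, w i * γ ^ 2 / ((x i - a) ^ 2 + γ ^ 2)) atTop
      (nhds 1) := by
    have : Tendsto (fun γ : ℝ => ∑ i, w i * γ ^ 2 / ((x i - a) ^ 2 + γ ^ 2)) atTop
        (nhds (∑ i : Fin n, w i)) := by
      apply tendsto_finset_sum
      intro i _
      have hdenom : Tendsto (fun γ : ℝ => (x i - a) ^ 2 + γ ^ 2) atTop atTop :=
        tendsto_atTop_add_const_left _ _ (tendsto_pow_atTop two_ne_zero)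
      have h0 : Tendsto (fun γ : ℝ => w i * (x i - a) ^ 2 / ((x i - a) ^ 2 + γ ^ 2))
          atTop (nhds 0) := Tendsto.div_atTop tendsto_const_nhds hdenom
      have := tendsto_const_nhds (α := ℝ) (x := w i) (f := atTop) |>.sub h0
      rw [sub_zero] at this
      apply this.congr'
      filter_upwards [eventually_ge_atTop (1:ℝ)] with γ hγ
      have hpos : 0 < (x i - a) ^ 2 + γ ^ 2 := by positivity
      field_simp
      ring
    rwa [hw1] at this
  refine ⟨hmono, ⟨_, hclt, htend0⟩, htop, ?_⟩
  -- existence and uniqueness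
  have hcont : ContinuousOn (fun γ : ℝ => ∑ i, w i * γ ^ 2 / ((x i - a) ^ 2 + γ ^ 2))
      (Set.Ioi (0 : ℝ)) := by
    apply continuousOn_finset_sum
    intro i _
    apply ContinuousOn.div (by fun_prop) (by fun_prop)
    intro γ hγ
    exact (hd i γ hγ).ne'
  obtain ⟨γ1, hγ1lt, hγ1pos⟩ :
      ∃ γ1 : ℝ, (∑ i, w i * γ1 ^ 2 / ((x i - a) ^ 2 + γ1 ^ 2)) < 1 / 2 ∧ γ1 ∈ Set.Ioi (0:ℝ) :=
    ((htend0.eventually_lt_const hclt).and self_mem_nhdsWithin).exists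
  obtain ⟨γ2, hγ2gt, hγ2ge⟩ :
      ∃ γ2 : ℝ, 1 / 2 < (∑ i, w i * γ2 ^ 2 / ((x i - a) ^ 2 + γ2 ^ 2)) ∧ γ1 ≤ γ2 :=
    ((htop.eventually_const_lt (by norm_num)).and (eventually_ge_atTop γ1)).exists
  have hsub : Set.Icc γ1 γ2 ⊆ Set.Ioi (0:ℝ) := fun y hy => lt_of_lt_of_le hγ1pos hy.1
  have hivt := intermediate_value_Icc hγ2ge (hcont.mono hsub)
  have hmem : (1:ℝ)/2 ∈ Set.Icc ((fun γ : ℝ => ∑ i, w i * γ ^ 2 / ((x i - a) ^ 2 + γ ^ 2)) γ1)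
      ((fun γ : ℝ => ∑ i, w i * γ ^ 2 / ((x i - a) ^ 2 + γ ^ 2)) γ2) :=
    ⟨le_of_lt hγ1lt, le_of_lt hγ2gt⟩
  obtain ⟨γ', hγ'mem, hγ'eq⟩ := hivt hmem
  refine ⟨γ', ⟨hsub hγ'mem, hγ'eq⟩, ?_⟩
  rintro γ'' ⟨hγ''pos, hγ''eq⟩
  exact hmono.injOn hγ''pos (hsub hγ'mem) (hγ''eq.trans hγ'eq.symm)
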